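/- Let x ∈ H with ‖x‖ ≤ 1, let c₁, …, c_K ∈ H with ‖c_k‖ = 1 for all k and ⟨c_k, c_l⟩ ≥ 0 for all k, l, and let y ∈ ℝ^K with y_k ≥ 0 for all k. If y minimizes the function h(y) = ‖x − Σ_{k=1}^K y_k c_k‖² over the set of vectors in ℝ^K with nonnegative coordinates, then ‖y‖ ≤ 1. -/

import Mathlib

open RealInnerProductSpace

theorem stmt13 {H : Type*} [NormedAddCommGroup H] [InnerProductSpace ℝ H]
    {K : ℕ} (hK : 1 ≤ K)
    (x : H) (hx : ‖x‖ ≤ 1)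
    (c : Fin K → H) (hc : ∀ k, ‖c k‖ = 1) (hcc : ∀ k l, 0 ≤ ⟪c k, c l⟫)
    (y : EuclideanSpace ℝ (Fin K)) (hy : ∀ k, 0 ≤ y k)
    (hmin : ∀ z : EuclideanSpace ℝ (Fin K), (∀ k, 0 ≤ z k) →
      ‖x - ∑ k, y k • c k‖ ^ 2 ≤ ‖x - ∑ k, z k • c k‖ ^ 2) :
    ‖y‖ ≤ 1 := by
  set s : H := ∑ k, y k • c k with hs
  -- scaling inequality
  have key : ∀ t : ℝ, 0 ≤ t → ‖x - s‖ ^ 2 ≤ ‖x - t • s‖ ^ 2 := by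
    intro t ht
    have h := hmin (WithLp.toLp 2 (fun k => t * y k)) (fun k => mul_nonneg ht (hy k))
    have hsum : (∑ k, (t * y k) • c k) = t • s := by
      rw [hs, Finset.smul_sum]
      exact Finset.sum_congr rfl fun k _ => by rw [mul_smul]
    rw [← hsum]; exact h
  set a : ℝ := ⟪x, s⟫ with ha
  set b : ℝ := ‖s‖ ^ 2 with hb
  have hb0 : 0 ≤ b := by positivity
  have expand : ∀ t : ℝ, 0 ≤ t → ‖x‖ ^ 2 - 2 * a + b ≤ ‖x‖ ^ 2 - 2 * (t * a) + t ^ 2 * b := by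
    intro t ht
    have h := key t ht
    rw [norm_sub_sq_real, norm_sub_sq_real] at h
    rw [real_inner_smul_right, norm_smul, Real.norm_eq_abs, mul_pow, sq_abs] at h
    rw [ha, hb]
    exact h
  -- from t = 0 : b ≤ 2a
  have h0 := expand 0 le_rfl
  have hba2 : b ≤ 2 * a := by nlinarith
  -- b ≤ a
  have hba : b ≤ a := by
    by_contra hlt
    push_neg at hlt
    have ha0 : 0 ≤ a := by nlinarith
    have hbpos : 0 < b := by nlinarith
    set ε : ℝ := (b - a) / b with hε
    have hε0 : 0 < ε := div_pos (by linarith) hbpos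
    have hε1 : ε ≤ 1 := by
      rw [hε, div_le_one hbpos]; linarith
    have ht0 : (0:ℝ) ≤ 1 - ε := by linarith
    have h1 := expand (1 - ε) ht0
    have hεb : ε * b = b - a := div_mul_cancel₀ _ (ne_of_gt hbpos)
    nlinarith [h1, hεb, sq_nonneg ε]
  -- ‖s‖ ≤ 1
  have hs1 : ‖s‖ ^ 2 ≤ 1 := by
    have hcs : a ≤ ‖x‖ * ‖s‖ := real_inner_le_norm x s
    have hns : 0 ≤ ‖s‖ := norm_nonneg s
    have hxs : ‖x‖ * ‖s‖ ≤ ‖s‖ := mul_le_of_le_one_left hns hx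
    nlinarith [hba, hcs, hxs, hns, hb, sq_nonneg (‖s‖ - 1)]
  -- ‖y‖² = ∑ (y k)²
  have hynorm : ‖y‖ ^ 2 = ∑ k, (y k) ^ 2 := by
    rw [EuclideanSpace.norm_eq, Real.sq_sqrt (by positivity)]
    exact Finset.sum_congr rfl fun k _ => by rw [Real.norm_eq_abs, sq_abs]
  -- ∑ (y k)² ≤ ‖s‖²
  have hys : ∑ k, (y k) ^ 2 ≤ ‖s‖ ^ 2 := by
    have hinner : ‖s‖ ^ 2 = ∑ k, ∑ l, y k * (y l * ⟪c k, c l⟫) := by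
      rw [← real_inner_self_eq_norm_sq, hs, sum_inner]
      refine Finset.sum_congr rfl fun k _ => ?_
      rw [real_inner_smul_left, inner_sum]
      rw [Finset.mul_sum]
      exact Finset.sum_congr rfl fun l _ => by rw [real_inner_smul_right]
    rw [hinner]
    refine Finset.sum_le_sum fun k _ => ?_
    have hdiag : (y k) ^ 2 = y k * (y k * ⟪c k, c k⟫) := by
      rw [real_inner_self_eq_norm_sq, hc k]; ring
    rw [hdiag]
    exact Finset.single_le_sum (fun l _ => mul_nonneg (hy k) (mul_nonneg (hy l) (hcc k l)))
      (Finset.mem_univ k)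
  have : ‖y‖ ^ 2 ≤ 1 := by rw [hynorm]; linarith
  nlinarith [norm_nonneg y, this]
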